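/- Let r ≥ 0, let b, b₁, …, b_r ∈ ℤ and a₁, …, a_r ∈ ℤ with a_m ≥ 1 and 0 ≤ b_m < a_m for each m. Let G be the group presented by generators h, c₀, c₁, …, c_r subject to the relations c₀h^b = 1, c_m^{a_m}h^{b_m} = 1 and c_m h c_m^{−1} h^{−1} = 1 for m = 1,…,r, and c₀c₁⋯c_r = 1. Set N = b·∏_{m=1}^r a_m + ∑_{m=1}^r b_m·∏_{l≠m} a_l. If N ≠ 0, then the abelianization of G is a finite group of cardinality |N|. -/

import Mathlib

open Matrix in
lemma lemA {ι : Type*} [Fintype ι] [DecidableEq ι] (M : Matrix ι ι ℤ) (hM : M.det ≠ 0) :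
    Nat.card ((ι → ℤ) ⧸ LinearMap.range (Matrix.toLin' M)) = M.det.natAbs := by
  classical
  set f := Matrix.toLin' M with hf
  have hinj : Function.Injective f := by
    have hq : Function.Injective (Matrix.mulVec ((Int.castRingHom ℚ).mapMatrix M)) := by
      rw [Matrix.mulVec_injective_iff_isUnit, Matrix.isUnit_iff_isUnit_det,
        ← RingHom.map_det]
      simpa using hM
    intro x y hxy
    have key : ∀ v : ι → ℤ, Matrix.mulVec ((Int.castRingHom ℚ).mapMatrix M) (fun i => (v i : ℚ))
        = fun i => ((Matrix.mulVec M v i : ℤ) : ℚ) := by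
      intro v; ext i
      simp [Matrix.mulVec, dotProduct, RingHom.mapMatrix_apply]
    have h2 : (fun i => ((x i : ℤ) : ℚ)) = fun i => ((y i : ℤ) : ℚ) := by
      apply hq
      rw [key x, key y]
      have : Matrix.mulVec M x = Matrix.mulVec M y := hxy
      rw [this]
    funext i
    exact_mod_cast congrFun h2 i
  set N : Submodule ℤ (ι → ℤ) := LinearMap.range f with hNdef
  obtain ⟨n, snf⟩ := N.smithNormalForm (Pi.basisFun ℤ ι)
  have hidx : N.toAddSubgroup.index ≠ 0 :=
    Int.submodule_toAddSubgroup_index_ne_zero_iff.mpr ⟨(LinearEquiv.ofInjective f hinj).symm⟩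
  have hn : n = Fintype.card ι := snf.toAddSubgroup_index_ne_zero_iff.mp hidx
  have hcard : Nat.card ((ι → ℤ) ⧸ N) = N.toAddSubgroup.index := rfl
  have hidxval : N.toAddSubgroup.index = ∏ i : Fin n, (snf.a i).natAbs := by
    rw [snf.toAddSubgroup_index_eq_pow_mul_prod]
    have h0 : Fintype.card ι - n = 0 := by omega
    rw [h0, pow_zero, one_mul]
    simp [Int.index_zmultiples]
  obtain ⟨bM, bN, femb, aa, hsnf⟩ := snf
  let g : Fin n ≃ ι := Equiv.ofBijective femb
    ((Fintype.bijective_iff_injective_and_card femb).mpr ⟨femb.injective, by simp [hn]⟩)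
  let B : Module.Basis ι ℤ N := bN.reindex g
  let e' : (ι → ℤ) ≃ₗ[ℤ] N := bM.equiv B (Equiv.refl ι)
  have hfeq : f = (N.subtype) ∘ₗ ((LinearEquiv.ofInjective f hinj : (ι → ℤ) ≃ₗ[ℤ] N) : (ι → ℤ) →ₗ[ℤ] N) := by
    apply LinearMap.ext; intro v
    exact (LinearEquiv.ofInjective_apply f (h := hinj) v).symm
  have hassoc : Associated (LinearMap.det f)
      (LinearMap.det ((N.subtype) ∘ₗ (e' : (ι → ℤ) →ₗ[ℤ] N))) := by
    rw [hfeq]; exact LinearMap.associated_det_comp_equiv _ _ _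
  have hBi : ∀ i : ι, ((N.subtype) ∘ₗ (e' : (ι → ℤ) →ₗ[ℤ] N)) (bM i) = aa (g.symm i) • bM i := by
    intro i
    have hgi : femb (g.symm i) = i := g.apply_symm_apply i
    have h1 : (((e' (bM i) : N)) : ι → ℤ) = ((B i : N) : ι → ℤ) := by
      rw [bM.equiv_apply]; rfl
    have h2 : ((B i : N) : ι → ℤ) = ((bN (g.symm i) : N) : ι → ℤ) := by
      simp [B]
    show (((e' (bM i) : N)) : ι → ℤ) = _
    rw [h1, h2, hsnf, hgi]
  have hdet' : LinearMap.det ((N.subtype) ∘ₗ (e' : (ι → ℤ) →ₗ[ℤ] N))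
      = ∏ i : ι, aa (g.symm i) := by
    rw [← LinearMap.det_toMatrix bM]
    rw [show (LinearMap.toMatrix bM bM) ((N.subtype) ∘ₗ (e' : (ι → ℤ) →ₗ[ℤ] N))
        = Matrix.diagonal (fun i => aa (g.symm i)) from ?_, Matrix.det_diagonal]
    ext i j
    rw [LinearMap.toMatrix_apply, hBi, _root_.map_smul, Module.Basis.repr_self]
    by_cases h : i = j
    · subst h; simp
    · simp [Matrix.diagonal_apply_ne _ (Ne.symm h), Finsupp.single_apply, h, Ne.symm h]
  have hdetf : (LinearMap.det f).natAbs = (∏ i : ι, aa (g.symm i)).natAbs := by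
    rw [Int.natAbs_eq_iff_associated]
    exact hassoc.trans (by rw [hdet'])
  have hprod : (∏ i : ι, aa (g.symm i)).natAbs = ∏ j : Fin n, (aa j).natAbs := by
    rw [Equiv.prod_comp g.symm aa]
    exact map_prod Int.natAbsHom aa Finset.univ
  have hMdet : LinearMap.det f = M.det := LinearMap.det_toLin' M
  rw [hcard, hidxval]
  rw [← hMdet, hdetf, hprod]

noncomputable def seifV (r : ℕ) (b : ℤ) (a bb : Fin r → ℤ) :
    (Unit ⊕ Fin (r + 1)) → ((Unit ⊕ Fin (r + 1)) → ℤ) :=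
  Sum.elim (fun _ => ∑ m : Fin (r + 1), Pi.single (Sum.inr m) 1)
    (fun j => Fin.cases (Pi.single (Sum.inr 0) 1 + b • Pi.single (Sum.inl ()) 1)
      (fun m => a m • Pi.single (Sum.inr m.succ) 1 + bb m • Pi.single (Sum.inl ()) 1) j)

/-- block reindexing equiv -/
def seifE (r : ℕ) : (Unit ⊕ Fin (r + 1)) ≃ ((Unit ⊕ Unit) ⊕ Fin r) where
  toFun := Sum.elim (fun _ => Sum.inl (Sum.inl ()))
    (fun j => Fin.cases (Sum.inl (Sum.inr ())) (fun m => Sum.inr m) j)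
  invFun := Sum.elim (Sum.elim (fun _ => Sum.inl ()) (fun _ => Sum.inr 0)) (fun m => Sum.inr m.succ)
  left_inv := by
    rintro (⟨⟩ | j)
    · rfl
    · induction j using Fin.cases <;> simp
  right_inv := by
    rintro ((⟨⟩ | ⟨⟩) | m) <;> simp

lemma seif_det (r : ℕ) (b : ℤ) (a bb : Fin r → ℤ) (ha : ∀ m, 1 ≤ a m) (N : ℤ)
    (hN : N = b * ∏ m, a m + ∑ m, bb m * ∏ l ∈ Finset.univ.erase m, a l) :
    (Matrix.of fun i j => seifV r b a bb j i).det = -N := by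
  classical
  have ha0 : ∀ m, (a m : ℚ) ≠ 0 := fun m => by
    have := ha m; intro h; rw [Int.cast_eq_zero] at h; omega
  set M := (Matrix.of fun i j => seifV r b a bb j i) with hMdef
  let A : Matrix (Unit ⊕ Unit) (Unit ⊕ Unit) ℤ :=
    Matrix.of (Sum.elim (fun _ => Sum.elim (fun _ => 0) (fun _ => b))
      (fun _ => Sum.elim (fun _ => 1) (fun _ => 1)))
  let B : Matrix (Unit ⊕ Unit) (Fin r) ℤ :=
    Matrix.of fun i m => Sum.elim (fun _ => bb m) (fun _ => 0) i
  let C : Matrix (Fin r) (Unit ⊕ Unit) ℤ :=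
    Matrix.of fun _ j => Sum.elim (fun _ => (1 : ℤ)) (fun _ => 0) j
  let D : Matrix (Fin r) (Fin r) ℤ := Matrix.diagonal a
  have hsub : M.submatrix ⇑(seifE r).symm ⇑(seifE r).symm = Matrix.fromBlocks A B C D := by
    ext i j
    rcases i with (⟨⟩ | ⟨⟩) | k <;> rcases j with (⟨⟩ | ⟨⟩) | m <;>
      simp [M, A, B, C, D, seifV, seifE, Pi.single_apply, Matrix.diagonal_apply,
        Fin.succ_ne_zero, Fin.succ_inj, eq_comm]
    rcases eq_or_ne k m with h | h <;> simp [h]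
  have hdet : M.det = (Matrix.fromBlocks A B C D).det := by
    rw [← hsub, Matrix.det_submatrix_equiv_self]
  -- move to ℚ
  let cq : ℤ → ℚ := fun x => (x : ℚ)
  let Aq := A.map cq
  let Bq := B.map cq
  let Cq := C.map cq
  let Dq : Matrix (Fin r) (Fin r) ℚ := Matrix.diagonal fun m => (a m : ℚ)
  have hDq : D.map cq = Dq := by
    ext i j
    rcases eq_or_ne i j with h | h
    · subst h; simp [D, Dq, cq]
    · simp [D, Dq, cq, Matrix.diagonal_apply_ne _ h]
  haveI : Invertible Dq := by
    apply Matrix.invertibleOfIsUnitDet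
    rw [Matrix.det_diagonal]
    exact (IsUnit.mk0 _ (Finset.prod_ne_zero_iff.mpr fun m _ => ha0 m))
  have hcast : ((M.det : ℤ) : ℚ) = (Matrix.fromBlocks Aq Bq Cq Dq).det := by
    rw [hdet]
    rw [show ((Matrix.fromBlocks A B C D).det : ℚ)
        = (Int.castRingHom ℚ) (Matrix.fromBlocks A B C D).det from rfl, RingHom.map_det]
    congr 1
    rw [RingHom.mapMatrix_apply, Matrix.fromBlocks_map]
    have hDq' : D.map ⇑(Int.castRingHom ℚ) = Dq := hDq
    rw [hDq']
    rfl
  rw [Matrix.det_fromBlocks₂₂] at hcast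
  -- compute the small 2×2 determinant
  set s : ℚ := ∑ m, (bb m : ℚ) * (a m : ℚ)⁻¹ with hs
  have hDinv : ⅟Dq = Matrix.diagonal (fun m => ((a m : ℚ))⁻¹) := by
    apply invOf_eq_right_inv
    rw [Matrix.diagonal_mul_diagonal]
    rw [show (fun m => (a m : ℚ) * ((a m : ℚ))⁻¹) = fun _ => (1:ℚ) from ?_, Matrix.diagonal_one]
    funext m
    exact mul_inv_cancel₀ (ha0 m)
  have hsmall : Aq - Bq * ⅟Dq * Cq =
      Matrix.fromBlocks (Matrix.of fun _ _ => -s) (Matrix.of fun _ _ => (b : ℚ))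
        (Matrix.of fun _ _ => 1) (1 : Matrix Unit Unit ℚ) := by
    rw [hDinv]
    ext i j
    rcases i with ⟨⟩ | ⟨⟩ <;> rcases j with ⟨⟩ | ⟨⟩ <;>
      simp [Aq, Bq, Cq, Dq, A, B, C, cq, Matrix.mul_apply, Matrix.diagonal_apply,
        Matrix.fromBlocks, Matrix.one_apply, Ring.inverse_eq_inv', hs,
        RingHom.mapMatrix_apply, Finset.mul_sum]
  have h22 : (Aq - Bq * ⅟Dq * Cq).det = -s - b := by
    rw [hsmall, Matrix.det_fromBlocks_one₂₂]
    rw [Matrix.det_unique]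
    simp [Matrix.sub_apply, Matrix.mul_apply]
  have hDqdet : Dq.det = ∏ m, (a m : ℚ) := by simp [Dq]
  have hprodsum : (∏ m, (a m : ℚ)) * s = ∑ m, (bb m : ℚ) * ∏ l ∈ Finset.univ.erase m, (a l : ℚ) := by
    rw [hs, Finset.mul_sum]
    refine Finset.sum_congr rfl fun m _ => ?_
    rw [← Finset.mul_prod_erase Finset.univ (fun l => ((a l : ℚ))) (Finset.mem_univ m)]
    calc ((a m : ℚ) * ∏ l ∈ Finset.univ.erase m, (a l : ℚ)) * ((bb m : ℚ) * ((a m : ℚ))⁻¹)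
        = ((∏ l ∈ Finset.univ.erase m, (a l : ℚ)) * (bb m : ℚ)) * ((a m : ℚ) * ((a m : ℚ))⁻¹) := by
          ring
      _ = (bb m : ℚ) * ∏ l ∈ Finset.univ.erase m, (a l : ℚ) := by
          rw [mul_inv_cancel₀ (ha0 m), mul_one, mul_comm]
  have hfinal : ((M.det : ℤ) : ℚ) = ((-N : ℤ) : ℚ) := by
    rw [hcast, h22, hDqdet, hN]
    push_cast
    rw [mul_sub, mul_neg, hprodsum]
    ring
  exact_mod_cast hfinal

/-- The abelianization of the fundamental group of a Seifert fibered space with Seifert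
data `(b; b₁/a₁, …, b_r/a_r)` is finite of cardinality `|N|`, where
`N = b·∏ a_m + ∑_m b_m·∏_{l ≠ m} a_l`, whenever `N ≠ 0`.
Generators: `Sum.inl () = h`, `Sum.inr m = c_m` for `m : Fin (r+1)` (so `c₀, …, c_r`). -/
theorem stmt_11 (r : ℕ) (b : ℤ) (a bb : Fin r → ℤ)
    (ha : ∀ m, 1 ≤ a m) (hbb : ∀ m, 0 ≤ bb m ∧ bb m < a m)
    (N : ℤ)
    (hN : N = b * ∏ m, a m + ∑ m, bb m * ∏ l ∈ Finset.univ.erase m, a l)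
    (hN0 : N ≠ 0)
    (rels : Set (FreeGroup (Unit ⊕ Fin (r + 1))))
    (hrels : rels =
      {FreeGroup.of (Sum.inr (0 : Fin (r + 1))) * (FreeGroup.of (Sum.inl ())) ^ b}
      ∪ (⋃ m : Fin r,
          {FreeGroup.of (Sum.inr m.succ) ^ (a m) * (FreeGroup.of (Sum.inl ())) ^ (bb m),
           FreeGroup.of (Sum.inr m.succ) * FreeGroup.of (Sum.inl ())
             * (FreeGroup.of (Sum.inr m.succ))⁻¹ * (FreeGroup.of (Sum.inl ()))⁻¹})
      ∪ {(List.ofFn fun m : Fin (r + 1) => FreeGroup.of (Sum.inr m)).prod}) :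
    Finite (Abelianization (PresentedGroup rels)) ∧
    Nat.card (Abelianization (PresentedGroup rels)) = N.natAbs := by
  classical
  set V := seifV r b a bb with hV
  set L : Submodule ℤ ((Unit ⊕ Fin (r + 1)) → ℤ) := Submodule.span ℤ (Set.range V) with hLdef
  -- membership of the three kinds of generators
  have hmem0 : Pi.single (Sum.inr (0 : Fin (r+1))) 1 + b • Pi.single (Sum.inl ()) 1 ∈ L := by
    apply Submodule.subset_span
    exact ⟨Sum.inr 0, by simp [hV, seifV]⟩
  have hmemm : ∀ m : Fin r,
      a m • Pi.single (Sum.inr m.succ) 1 + bb m • Pi.single (Sum.inl ()) 1 ∈ L := by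
    intro m
    apply Submodule.subset_span
    exact ⟨Sum.inr m.succ, by simp [hV, seifV]⟩
  have hmemw : (∑ m : Fin (r+1), Pi.single (Sum.inr m) (1:ℤ)) ∈ L := by
    apply Submodule.subset_span
    exact ⟨Sum.inl (), by simp [hV, seifV]⟩
  -- the forward map
  set F : (Unit ⊕ Fin (r + 1)) → Multiplicative (((Unit ⊕ Fin (r + 1)) → ℤ) ⧸ L) :=
    fun x => Multiplicative.ofAdd (Submodule.Quotient.mk (Pi.single x 1)) with hF
  have hrelF : ∀ w ∈ rels, FreeGroup.lift F w = 1 := by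
    intro w hw
    rw [hrels] at hw
    simp only [Set.union_assoc, Set.mem_union, Set.mem_singleton_iff, Set.mem_iUnion,
      Set.mem_insert_iff] at hw
    rcases hw with h | ⟨m, h | h⟩ | h
    · subst h
      rw [map_mul, map_zpow, FreeGroup.lift_apply_of, FreeGroup.lift_apply_of, hF]
      rw [← ofAdd_zsmul, ← ofAdd_add, ← Submodule.Quotient.mk_smul, ← Submodule.Quotient.mk_add]
      rw [show (1 : Multiplicative (((Unit ⊕ Fin (r + 1)) → ℤ) ⧸ L))
          = Multiplicative.ofAdd 0 from rfl]
      congr 1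
      rw [Submodule.Quotient.mk_eq_zero]
      exact hmem0
    · subst h
      rw [map_mul, map_zpow, map_zpow, FreeGroup.lift_apply_of, FreeGroup.lift_apply_of, hF]
      rw [← ofAdd_zsmul, ← ofAdd_zsmul, ← ofAdd_add, ← Submodule.Quotient.mk_smul,
        ← Submodule.Quotient.mk_smul, ← Submodule.Quotient.mk_add]
      rw [show (1 : Multiplicative (((Unit ⊕ Fin (r + 1)) → ℤ) ⧸ L))
          = Multiplicative.ofAdd 0 from rfl]
      congr 1
      rw [Submodule.Quotient.mk_eq_zero]
      exact hmemm m
    · subst h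
      simp only [map_mul, map_inv, FreeGroup.lift_apply_of]
      rw [← commutatorElement_def, commutatorElement_eq_one_iff_mul_comm]
      exact mul_comm _ _
    · subst h
      rw [map_list_prod, List.map_ofFn]
      rw [List.prod_ofFn]
      rw [show (∏ m : Fin (r+1), (FreeGroup.lift F ∘ fun m => FreeGroup.of (Sum.inr m)) m)
          = ∏ m : Fin (r+1), F (Sum.inr m) from by simp]
      rw [hF]
      simp only []
      rw [show (∏ m : Fin (r+1),
            Multiplicative.ofAdd (Submodule.Quotient.mk (p := L) (Pi.single (Sum.inr m) 1)))
          = Multiplicative.ofAdd (∑ m : Fin (r+1),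
              (Submodule.Quotient.mk (p := L) (Pi.single (Sum.inr m) 1))) from ?_]
      · rw [show (1 : Multiplicative (((Unit ⊕ Fin (r + 1)) → ℤ) ⧸ L))
            = Multiplicative.ofAdd 0 from rfl]
        congr 1
        rw [show (∑ m : Fin (r+1), (Submodule.Quotient.mk (p := L) (Pi.single (Sum.inr m) 1)))
            = Submodule.Quotient.mk (∑ m : Fin (r+1), Pi.single (Sum.inr m) (1:ℤ)) from
          (map_sum (L.mkQ) _ _).symm]
        rw [Submodule.Quotient.mk_eq_zero]
        exact hmemw
      · exact (map_prod (AddEquiv.toMultiplicative (AddEquiv.refl _) : _) _ _).symm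
  -- forward hom
  set φ : Abelianization (PresentedGroup rels) →* Multiplicative (((Unit ⊕ Fin (r + 1)) → ℤ) ⧸ L) :=
    Abelianization.lift (PresentedGroup.toGroup hrelF) with hφ
  have hφof : ∀ x, φ (Abelianization.of (PresentedGroup.of x)) = F x := by
    intro x
    rw [hφ, Abelianization.lift_apply_of]
    exact PresentedGroup.toGroup.of hrelF
  -- backward hom
  set gen : (Unit ⊕ Fin (r + 1)) → Additive (Abelianization (PresentedGroup rels)) :=
    fun x => Additive.ofMul (Abelianization.of (PresentedGroup.of x)) with hgen
  set g0 : ((Unit ⊕ Fin (r + 1)) → ℤ) →ₗ[ℤ] Additive (Abelianization (PresentedGroup rels)) :=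
    (Pi.basisFun ℤ _).constr ℤ gen with hg0def
  have hg0 : ∀ x, g0 (Pi.single x 1) = gen x := by
    intro x
    rw [hg0def, ← Pi.basisFun_apply ℤ _ x]
    exact Module.Basis.constr_basis _ _ _ _
  have hΦ1 : ∀ w ∈ rels, Abelianization.of (PresentedGroup.mk rels w)
      = (1 : Abelianization (PresentedGroup rels)) := by
    intro w hw
    have h1 : PresentedGroup.mk rels w = 1 :=
      (QuotientGroup.eq_one_iff w).mpr (Subgroup.subset_normalClosure hw)
    rw [h1, map_one]
  have hker : L ≤ LinearMap.ker g0 := by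
    rw [hLdef, Submodule.span_le]
    rintro v ⟨x, rfl⟩
    rw [SetLike.mem_coe, LinearMap.mem_ker]
    rcases x with u | j
    · have hVe : V (Sum.inl u) = ∑ m : Fin (r + 1), Pi.single (Sum.inr m) (1:ℤ) := by
        simp [hV, seifV]
      rw [hVe, map_sum]
      have e1 : ∀ m : Fin (r + 1), g0 (Pi.single (Sum.inr m) (1:ℤ)) = gen (Sum.inr m) :=
        fun m => hg0 _
      rw [Finset.sum_congr rfl fun m _ => e1 m]
      have e2 : (∑ m : Fin (r + 1), gen (Sum.inr m))
          = Additive.ofMul (∏ m : Fin (r + 1),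
              Abelianization.of (PresentedGroup.of (rels := rels) (Sum.inr m))) :=
        (ofMul_prod _ _).symm
      rw [e2]
      have e3 : (∏ m : Fin (r + 1), Abelianization.of (PresentedGroup.of (rels := rels) (Sum.inr m)))
          = Abelianization.of (PresentedGroup.mk rels
              ((List.ofFn fun m : Fin (r + 1) => FreeGroup.of (Sum.inr m)).prod)) := by
        rw [map_list_prod, map_list_prod, List.map_ofFn, List.map_ofFn, List.prod_ofFn]
        rfl
      rw [e3, hΦ1 _ (by rw [hrels]; exact Set.mem_union_right _ rfl)]
      rfl
    · induction j using Fin.cases with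
      | zero =>
        have hVe : V (Sum.inr 0) = Pi.single (Sum.inr (0 : Fin (r+1))) 1
            + b • Pi.single (Sum.inl ()) 1 := by simp [hV, seifV]
        rw [hVe, map_add, map_smul, hg0, hg0]
        have e2 : gen (Sum.inr 0) + b • gen (Sum.inl ())
            = Additive.ofMul (Abelianization.of (PresentedGroup.mk rels
                (FreeGroup.of (Sum.inr (0 : Fin (r+1))) * (FreeGroup.of (Sum.inl ())) ^ b))) := by
          simp only [map_mul, map_zpow, ofMul_mul, ofMul_zpow]
          rfl
        rw [e2, hΦ1 _ (by rw [hrels]; exact Set.mem_union_left _ (Set.mem_union_left _ rfl))]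
        rfl
      | succ m =>
        have hVe : V (Sum.inr m.succ) = a m • Pi.single (Sum.inr m.succ) 1
            + bb m • Pi.single (Sum.inl ()) 1 := by simp [hV, seifV]
        rw [hVe, map_add, map_smul, map_smul, hg0, hg0]
        have e2 : a m • gen (Sum.inr m.succ) + bb m • gen (Sum.inl ())
            = Additive.ofMul (Abelianization.of (PresentedGroup.mk rels
                (FreeGroup.of (Sum.inr m.succ) ^ a m * (FreeGroup.of (Sum.inl ())) ^ bb m))) := by
          simp only [map_mul, map_zpow, ofMul_mul, ofMul_zpow]
          rfl
        rw [e2, hΦ1 _ ?_]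
        · rfl
        · rw [hrels]
          refine Set.mem_union_left _ (Set.mem_union_right _ ?_)
          exact Set.mem_iUnion.mpr ⟨m, Or.inl rfl⟩
  set ψl := L.liftQ g0 hker with hψl
  set ψm : Multiplicative (((Unit ⊕ Fin (r + 1)) → ℤ) ⧸ L) →* Abelianization (PresentedGroup rels)
    := MonoidHom.toAdditiveRight.symm ψl.toAddMonoidHom with hψmdef
  have hψm : ∀ v : (Unit ⊕ Fin (r + 1)) → ℤ,
      ψm (Multiplicative.ofAdd (Submodule.Quotient.mk v)) = Additive.toMul (g0 v) := by
    intro v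
    show Additive.toMul (ψl (Submodule.Quotient.mk v)) = Additive.toMul (g0 v)
    rw [hψl, Submodule.liftQ_apply]
  have h2 : ψm.comp φ = MonoidHom.id _ := by
    apply Abelianization.hom_ext
    apply PresentedGroup.ext
    intro x
    simp only [MonoidHom.comp_apply, MonoidHom.id_apply]
    show ψm (φ (Abelianization.of (PresentedGroup.of x))) = Abelianization.of (PresentedGroup.of x)
    rw [hφof, hF]
    simp only []
    rw [hψm (Pi.single x 1), hg0]
    rfl
  have h1 : φ.comp ψm = MonoidHom.id _ := by
    have key : ∀ v : (Unit ⊕ Fin (r + 1)) → ℤ,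
        φ (Additive.toMul (g0 v)) = Multiplicative.ofAdd (Submodule.Quotient.mk (p := L) v) := by
      set F1 : ((Unit ⊕ Fin (r + 1)) → ℤ) →+ (((Unit ⊕ Fin (r + 1)) → ℤ) ⧸ L) :=
        (MonoidHom.toAdditiveLeft φ).comp g0.toAddMonoidHom with hF1
      set F2 : ((Unit ⊕ Fin (r + 1)) → ℤ) →+ (((Unit ⊕ Fin (r + 1)) → ℤ) ⧸ L) :=
        (L.mkQ).toAddMonoidHom with hF2
      have hFF : F1 = F2 := by
        apply AddMonoidHom.functions_ext
        intro x n
        have hsm : Pi.single x n = n • (Pi.single x 1 : (Unit ⊕ Fin (r + 1)) → ℤ) := by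
          rw [← Pi.single_smul, smul_eq_mul, mul_one]
        rw [hsm, map_zsmul, map_zsmul]
        congr 1
        show (MonoidHom.toAdditiveLeft φ) (g0.toAddMonoidHom (Pi.single x 1)) = L.mkQ (Pi.single x 1)
        have : g0.toAddMonoidHom (Pi.single x 1) = gen x := hg0 x
        rw [this]
        show Multiplicative.toAdd (φ (Abelianization.of (PresentedGroup.of x))) = _
        rw [hφof, hF]
        rfl
      intro v
      have := congrFun (congrArg (fun (f : _ →+ _) => (f : (_ → ℤ) → _)) hFF) v
      have h3 : Multiplicative.toAdd (φ (Additive.toMul (g0 v)))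
          = Submodule.Quotient.mk (p := L) v := this
      calc φ (Additive.toMul (g0 v))
          = Multiplicative.ofAdd (Multiplicative.toAdd (φ (Additive.toMul (g0 v)))) := rfl
        _ = Multiplicative.ofAdd (Submodule.Quotient.mk (p := L) v) := by rw [h3]
    apply MonoidHom.ext
    intro t
    obtain ⟨v, hv⟩ := Submodule.Quotient.mk_surjective L (Multiplicative.toAdd t)
    have ht : t = Multiplicative.ofAdd (Submodule.Quotient.mk (p := L) v) := by
      rw [hv]; rfl
    rw [MonoidHom.comp_apply, MonoidHom.id_apply, ht, hψm, key]
  have E := MonoidHom.toMulEquiv φ ψm h2 h1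
  -- cardinality computation
  have hLrange : L = LinearMap.range (Matrix.toLin' (Matrix.of fun i j => V j i)) := by
    rw [Matrix.range_toLin', hLdef]
    rfl
  have hdet : (Matrix.of fun i j => V j i).det = -N := by
    rw [hV]; exact seif_det r b a bb ha N hN
  have hdet0 : (Matrix.of fun i j => V j i).det ≠ 0 := by
    rw [hdet]; exact neg_ne_zero.mpr hN0
  have hcard : Nat.card (((Unit ⊕ Fin (r + 1)) → ℤ) ⧸ L) = N.natAbs := by
    rw [hLrange, lemA _ hdet0, hdet, Int.natAbs_neg]
  have hfinT : Finite ((((Unit ⊕ Fin (r + 1)) → ℤ) ⧸ L)) := by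
    have hne : Nat.card (((Unit ⊕ Fin (r + 1)) → ℤ) ⧸ L) ≠ 0 := by
      rw [hcard]; exact Int.natAbs_ne_zero.mpr hN0
    exact (Nat.card_ne_zero.mp hne).2
  have hfinM : Finite (Multiplicative ((((Unit ⊕ Fin (r + 1)) → ℤ) ⧸ L))) := hfinT
  constructor
  · exact Finite.of_equiv _ E.toEquiv.symm
  · rw [Nat.card_congr E.toEquiv]
    exact hcard
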